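/- arXiv:1905.01835 — 4 statements merged into one kernel-verified Lean document; each statement's English description precedes it below -/
import Mathlib

section
/- Shift property of the WOLCT: for any window function φ ∈ L²(ℝ) \ {0}, any f ∈ L²(ℝ), and any t₀ ∈ ℝ, writing T_{t₀}f(t) = f(t − t₀), one has V_φ^A{T_{t₀}f}(u, w) = exp(i a t₀ w₀ − i(ac/2)t₀² + i c t₀(u − u₀)) · V_φ^A f(u − a t₀, w − t₀) for all u, w ∈ ℝ. -/
open MeasureTheory Complex ComplexConjugate

/-- The OLCT kernel K_A(t,u) for A = (a,b,c,d,u₀,w₀). -/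
noncomputable def olctKernel (a b c d u₀ w₀ : ℝ) (t u : ℝ) : ℂ :=
  (1 / (2 * Real.pi * Complex.I * b) ^ ((1:ℂ)/2)) *
    Complex.exp (Complex.I * (a / (2*b)) * t^2 - Complex.I / b * t * (u - u₀)
      - Complex.I / b * u * (d*u₀ - b*w₀) + Complex.I * (d / (2*b)) * (u^2 + u₀^2))

/-- The windowed offset linear canonical transform V_φ^A f(u,w). -/
noncomputable def wolct (a b c d u₀ w₀ : ℝ) (φ f : ℝ → ℂ) (u w : ℝ) : ℂ :=
  ∫ t : ℝ, f t * conj (φ (t - w)) * olctKernel a b c d u₀ w₀ t u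

/-- Shift property of the WOLCT. -/
theorem wolct_shift (a b c d u₀ w₀ : ℝ) (hb : b ≠ 0) (hA : a * d - b * c = 1)
    (φ f : ℝ → ℂ) (hφ : MemLp φ 2 volume) (hφ0 : φ ≠ 0)
    (hf : MemLp f 2 volume)
    (hfi : ∀ u w : ℝ, Integrable (fun t : ℝ => f t * conj (φ (t - w)) * olctKernel a b c d u₀ w₀ t u))
    (t₀ : ℝ) (u w : ℝ) :
    wolct a b c d u₀ w₀ φ (fun t => f (t - t₀)) u w
      = Complex.exp (Complex.I * a * t₀ * w₀ - Complex.I * (a * c / 2) * t₀^2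
          + Complex.I * c * t₀ * (u - u₀))
        * wolct a b c d u₀ w₀ φ f (u - a * t₀) (w - t₀) := by
  have hb' : (b : ℂ) ≠ 0 := by exact_mod_cast hb
  have hA' : (a : ℂ) * d - b * c = 1 := by exact_mod_cast hA
  unfold wolct
  rw [← MeasureTheory.integral_const_mul]
  rw [show (∫ t : ℝ, f (t - t₀) * conj (φ (t - w)) * olctKernel a b c d u₀ w₀ t u)
      = ∫ s : ℝ, f (s + t₀ - t₀) * conj (φ (s + t₀ - w)) * olctKernel a b c d u₀ w₀ (s + t₀) u
    from (MeasureTheory.integral_add_right_eq_self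
      (fun t => f (t - t₀) * conj (φ (t - w)) * olctKernel a b c d u₀ w₀ t u) t₀).symm]
  congr 1
  ext s
  have hs : s + t₀ - t₀ = s := by ring
  have hw : s - (w - t₀) = s + t₀ - w := by ring
  rw [hs, hw]
  unfold olctKernel
  rw [show (Complex.I * ((a:ℂ) / (2*b)) * ((s + t₀ : ℝ):ℂ)^2
        - Complex.I / b * ((s + t₀ : ℝ):ℂ) * ((u:ℂ) - u₀)
        - Complex.I / b * (u:ℂ) * ((d:ℂ)*u₀ - b*w₀)
        + Complex.I * ((d:ℂ)/(2*b)) * ((u:ℂ)^2 + (u₀:ℂ)^2))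
      = (Complex.I * ((a:ℂ) / (2*b)) * (s:ℂ)^2
        - Complex.I / b * (s:ℂ) * (((u - a*t₀ : ℝ):ℂ) - u₀)
        - Complex.I / b * ((u - a*t₀ : ℝ):ℂ) * ((d:ℂ)*u₀ - b*w₀)
        + Complex.I * ((d:ℂ)/(2*b)) * (((u - a*t₀ : ℝ):ℂ)^2 + (u₀:ℂ)^2))
      + (Complex.I * (a:ℂ) * t₀ * w₀ - Complex.I * ((a:ℂ) * c / 2) * (t₀:ℂ)^2
        + Complex.I * (c:ℂ) * (t₀:ℂ) * ((u:ℂ) - u₀))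
    from by
      have hbi : (b:ℂ) * (b:ℂ)⁻¹ = 1 := mul_inv_cancel₀ hb'
      push_cast
      linear_combination (Complex.I*(t₀:ℂ)*(a*w₀ + c*u - c*u₀ - a*c*t₀/2)) * hbi
        + (Complex.I*(t₀:ℂ)*((u:ℂ) - u₀ - a*t₀/2)*(b:ℂ)⁻¹) * hA']
  rw [Complex.exp_add]
  ring
end

section
/- Modulation property of the WOLCT: for any window function φ ∈ L²(ℝ) \ {0}, any f ∈ L²(ℝ), and any s ∈ ℝ, writing M_s f(t) = f(t)·exp(ist), one has V_φ^A{M_s f}(u, w) = exp(i b s w₀ − i(db/2)s² + i d s(u − u₀)) · V_φ^A f(u − bs, w) for all u, w ∈ ℝ. -/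
open MeasureTheory Complex ComplexConjugate

lemma olct_kernel_mod (a b c d u₀ w₀ : ℝ) (hb : b ≠ 0) (s t u : ℝ) :
    Complex.exp (Complex.I * s * t) * olctKernel a b c d u₀ w₀ t u
      = Complex.exp (Complex.I * b * s * w₀ - Complex.I * (d * b / 2) * s^2
          + Complex.I * d * s * (u - u₀))
        * olctKernel a b c d u₀ w₀ t (u - b * s) := by
  have hbc : (b : ℂ) ≠ 0 := by exact_mod_cast hb
  rw [olctKernel, olctKernel]
  have key : Complex.exp (Complex.I * s * t) *
      Complex.exp (Complex.I * (a / (2*b)) * (t:ℂ)^2 - Complex.I / b * t * ((u:ℂ) - u₀)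
        - Complex.I / b * u * ((d:ℂ)*u₀ - (b:ℂ)*w₀) + Complex.I * ((d:ℂ) / (2*b)) * ((u:ℂ)^2 + (u₀:ℂ)^2))
      = Complex.exp (Complex.I * b * s * w₀ - Complex.I * ((d:ℂ) * b / 2) * (s:ℂ)^2
          + Complex.I * d * s * ((u:ℂ) - u₀)) *
        Complex.exp (Complex.I * (a / (2*b)) * (t:ℂ)^2
          - Complex.I / b * t * (((u - b * s : ℝ) : ℂ) - u₀)
          - Complex.I / b * ((u - b * s : ℝ) : ℂ) * ((d:ℂ)*u₀ - (b:ℂ)*w₀)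
          + Complex.I * ((d:ℂ) / (2*b)) * (((u - b * s : ℝ) : ℂ)^2 + (u₀:ℂ)^2)) := by
    rw [← Complex.exp_add, ← Complex.exp_add]
    congr 1
    have hinv : (b:ℂ)⁻¹ * b = 1 := inv_mul_cancel₀ hbc
    push_cast
    linear_combination (-(Complex.I*(s:ℂ)*t - Complex.I*(s:ℂ)*b*w₀ + Complex.I*(s:ℂ)*d*u₀
      - Complex.I*(d:ℂ)*s*u + Complex.I*(d:ℂ)*b*(s:ℂ)^2/2)) * hinv
  linear_combination (1 / (2 * Real.pi * Complex.I * (b:ℂ)) ^ ((1:ℂ)/2)) * key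

/-- Modulation property of the WOLCT. -/
theorem wolct_modulation (a b c d u₀ w₀ : ℝ) (hb : b ≠ 0) (hA : a * d - b * c = 1)
    (φ f : ℝ → ℂ) (hφ : MemLp φ 2 volume) (hφ0 : φ ≠ 0)
    (hf : MemLp f 2 volume)
    (hfi : ∀ u w : ℝ, Integrable (fun t : ℝ => f t * conj (φ (t - w)) * olctKernel a b c d u₀ w₀ t u))
    (s : ℝ) (u w : ℝ) :
    wolct a b c d u₀ w₀ φ (fun t => f t * Complex.exp (Complex.I * s * t)) u w
      = Complex.exp (Complex.I * b * s * w₀ - Complex.I * (d * b / 2) * s^2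
          + Complex.I * d * s * (u - u₀))
        * wolct a b c d u₀ w₀ φ f (u - b * s) w := by
  rw [wolct, wolct, ← integral_const_mul]
  congr 1
  funext t
  have hK := olct_kernel_mod a b c d u₀ w₀ hb s t u
  linear_combination (f t * conj (φ (t - w))) * hK
end

section
/- Plancherel-type identity for the WOLCT: let φ ∈ L²(ℝ) \ {0} be a window function and f ∈ L²(ℝ). Then ∫_ℝ ∫_ℝ |V_φ^A f(u, w)|² du dw = ‖f‖² · ‖φ‖², where ‖·‖ denotes the L²(ℝ) norm. -/
open MeasureTheory Complex ComplexConjugate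

open Real FourierTransform Filter

noncomputable def wC (b : ℝ) : ℂ := 1 / (2 * Real.pi * Complex.I * b) ^ ((1:ℂ)/2)

noncomputable def wgw (a b u₀ : ℝ) (φ f : ℝ → ℂ) (w t : ℝ) : ℂ :=
  f t * conj (φ (t - w)) * Complex.exp (((a/(2*b) * t^2 + u₀/b * t : ℝ) : ℂ) * Complex.I)

noncomputable def wph (b d u₀ w₀ u : ℝ) : ℝ := -(u*(d*u₀ - b*w₀))/b + d/(2*b)*(u^2+u₀^2)


lemma wfact (a b c d u₀ w₀ : ℝ) (hb : b ≠ 0) (φ f : ℝ → ℂ) (w t u : ℝ) :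
    f t * conj (φ (t - w)) * olctKernel a b c d u₀ w₀ t u
      = (wC b * Complex.exp ((wph b d u₀ w₀ u : ℂ) * Complex.I)) *
        (Complex.exp (((-2 * Real.pi * t * (u / (2 * Real.pi * b)) : ℝ) : ℂ) * Complex.I)
          • wgw a b u₀ φ f w t) := by
  have hb' : (b:ℂ) ≠ 0 := by exact_mod_cast hb
  have hπ : (Real.pi:ℂ) ≠ 0 := by exact_mod_cast Real.pi_ne_zero
  simp only [olctKernel, wC, wgw, wph, smul_eq_mul]
  have he : Complex.I * (a / (2*b)) * (t:ℂ)^2 - Complex.I / b * t * ((u:ℂ) - u₀)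
      - Complex.I / b * u * ((d:ℂ)*u₀ - b*w₀) + Complex.I * (d / (2*b)) * ((u:ℂ)^2 + u₀^2)
      = ((-(u*(d*u₀ - b*w₀))/b + d/(2*b)*(u^2+u₀^2) : ℝ) : ℂ) * Complex.I
        + ((-2 * Real.pi * t * (u / (2 * Real.pi * b)) : ℝ) : ℂ) * Complex.I
        + ((a/(2*b) * t^2 + u₀/b * t : ℝ) : ℂ) * Complex.I := by
    have hr : (-2 * Real.pi * t * (u / (2 * Real.pi * b)) : ℝ) = -(t*u)/b := by
      field_simp
    rw [hr]
    push_cast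
    field_simp
    ring
  rw [he, Complex.exp_add, Complex.exp_add]
  ring

lemma wolct_eq_fourier (a b c d u₀ w₀ : ℝ) (hb : b ≠ 0) (φ f : ℝ → ℂ) (u w : ℝ) :
    wolct a b c d u₀ w₀ φ f u w
      = (wC b * Complex.exp ((wph b d u₀ w₀ u : ℂ) * Complex.I)) *
          𝓕 (wgw a b u₀ φ f w) (u / (2 * Real.pi * b)) := by
  unfold wolct
  rw [Real.fourier_real_eq_integral_exp_smul, ← MeasureTheory.integral_const_mul]
  apply integral_congr_ae
  filter_upwards with t
  rw [wfact a b c d u₀ w₀ hb φ f w t u]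

lemma wC_norm_sq (b : ℝ) (hb : b ≠ 0) : ‖wC b‖^2 = (2 * Real.pi * |b|)⁻¹ := by
  have h2 : ((1:ℂ)/2) = ((1/2 : ℝ) : ℂ) := by norm_num
  have habs : ‖(2 * (Real.pi:ℂ) * Complex.I * b)‖ = 2 * Real.pi * |b| := by
    simp [abs_of_pos Real.pi_pos]
  rw [wC, h2]
  rw [norm_div, Complex.norm_cpow_real, habs]
  rw [norm_one]
  have hpos : (0:ℝ) < 2 * Real.pi * |b| := by positivity
  rw [div_pow, one_pow, ← Real.rpow_natCast ((2 * Real.pi * |b|) ^ (1/2 : ℝ)) 2,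
    ← Real.rpow_mul hpos.le]
  norm_num

lemma norm_wolct_sq (a b c d u₀ w₀ : ℝ) (hb : b ≠ 0) (φ f : ℝ → ℂ) (u w : ℝ) :
    ‖wolct a b c d u₀ w₀ φ f u w‖^2
      = (2 * Real.pi * |b|)⁻¹ * ‖𝓕 (wgw a b u₀ φ f w) (u / (2 * Real.pi * b))‖^2 := by
  rw [wolct_eq_fourier a b c d u₀ w₀ hb φ f u w]
  rw [norm_mul, norm_mul, mul_pow, mul_pow, wC_norm_sq b hb]
  have : ‖Complex.exp ((wph b d u₀ w₀ u : ℂ) * Complex.I)‖ = 1 := by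
    rw [Complex.norm_exp_ofReal_mul_I]
  rw [this]
  ring

lemma norm_wgw (a b u₀ : ℝ) (φ f : ℝ → ℂ) (w t : ℝ) :
    ‖wgw a b u₀ φ f w t‖^2 = ‖f t‖^2 * ‖φ (t - w)‖^2 := by
  rw [wgw, norm_mul, norm_mul, 
    Complex.norm_exp_ofReal_mul_I, mul_one, mul_pow, RCLike.norm_conj]

lemma wintegrable_conj {g : ℝ → ℂ} (hg : Integrable g volume) :
    Integrable (fun t => conj (g t)) volume := by
  refine ⟨Complex.continuous_conj.comp_aestronglyMeasurable hg.1, ?_⟩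
  simpa [HasFiniteIntegral] using hg.2

lemma wtendsto_translate (g : ℝ → ℂ) (hg : MemLp g 2 (volume : Measure ℝ)) :
    Filter.Tendsto (fun x : ℝ => eLpNorm (fun t => g (t + x) - g t) 2 volume)
      (nhds 0) (nhds 0) := by
  rw [ENNReal.tendsto_nhds_zero]
  intro ε hε
  set η : ENNReal := min (ε/3) 1 with hηdef
  have hη0 : η ≠ 0 :=
    (lt_min (ENNReal.div_pos hε.ne' (by norm_num)) zero_lt_one).ne' 
  have hη3 : η ≤ ε/3 := min_le_left _ _
  obtain ⟨k, hk_supp, hk_close, hk_cont, hk_mem⟩ :=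
    hg.exists_hasCompactSupport_eLpNorm_sub_le (p := 2) ENNReal.ofNat_ne_top hη0
  -- the enlarged support
  set S : Set ℝ := Metric.cthickening 1 (tsupport k) with hSdef
  have hS_compact : IsCompact S := hk_supp.cthickening
  have hS_meas : MeasurableSet S := Metric.isClosed_cthickening.measurableSet
  set M : ENNReal := volume S ^ (1 / (2:ENNReal).toReal) with hMdef
  have hM_ne_top : M ≠ ⊤ := by
    apply ENNReal.rpow_ne_top_of_nonneg (by norm_num)
    exact hS_compact.measure_lt_top.ne
  -- pick the constant c
  have hq0 : η / (M + 1) ≠ 0 :=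
    ENNReal.div_ne_zero.mpr ⟨hη0, by simp [hM_ne_top]⟩
  have hqt : η / (M + 1) ≠ ⊤ :=
    (ENNReal.div_lt_top (ne_top_of_le_ne_top (by norm_num) (min_le_right _ _))
      (by simp)).ne
  set c : ℝ := (η / (M + 1)).toReal with hcdef
  have hc0 : 0 < c := ENNReal.toReal_pos hq0 hqt
  -- uniform continuity of k
  have huc : UniformContinuous k :=
    Continuous.uniformContinuous_of_tendsto_cocompact hk_cont hk_supp.is_zero_at_infty
  obtain ⟨δ, hδ0, hδ⟩ := Metric.uniformContinuous_iff.mp huc c hc0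
  have hball : ∀ᶠ x : ℝ in nhds 0, |x| < min δ 1 := by
    have := Metric.ball_mem_nhds (0:ℝ) (by positivity : (0:ℝ) < min δ 1)
    filter_upwards [this] with x hx
    simpa [Real.dist_eq] using hx
  filter_upwards [hball] with x hx
  have hxδ : |x| < δ := lt_of_lt_of_le hx (min_le_left _ _)
  have hx1 : |x| ≤ 1 := le_of_lt (lt_of_lt_of_le hx (min_le_right _ _))
  -- measurability pieces
  have hmp : MeasurePreserving (fun t : ℝ => t + x) volume volume :=
    measurePreserving_add_right volume x
  have hgk : AEStronglyMeasurable (g - k) (volume : Measure ℝ) :=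
    hg.aestronglyMeasurable.sub hk_cont.aestronglyMeasurable
  have m1 : AEStronglyMeasurable (fun t : ℝ => (g - k) (t + x)) volume :=
    hgk.comp_measurePreserving hmp
  have m2 : AEStronglyMeasurable (fun t : ℝ => k (t + x) - k t) volume :=
    ((hk_cont.comp (continuous_id.add continuous_const)).sub hk_cont).aestronglyMeasurable
  have m3 : AEStronglyMeasurable (k - g) (volume : Measure ℝ) :=
    hk_cont.aestronglyMeasurable.sub hg.aestronglyMeasurable
  -- decomposition
  have hsplit : (fun t : ℝ => g (t + x) - g t)
      = (fun t : ℝ => (g - k) (t + x)) + ((fun t : ℝ => k (t + x) - k t) + (k - g)) := by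
    funext t; simp only [Pi.add_apply, Pi.sub_apply]; ring
  -- bounds
  have b1 : eLpNorm (fun t : ℝ => (g - k) (t + x)) 2 volume ≤ η := by
    have : eLpNorm ((g - k) ∘ fun t : ℝ => t + x) 2 volume = eLpNorm (g - k) 2 volume :=
      eLpNorm_comp_measurePreserving hgk hmp
    calc eLpNorm (fun t : ℝ => (g - k) (t + x)) 2 volume
        = eLpNorm (g - k) 2 volume := this
      _ ≤ η := hk_close
  have b3 : eLpNorm (k - g) 2 volume ≤ η := by
    rw [eLpNorm_sub_comm]; exact hk_close
  have b2 : eLpNorm (fun t : ℝ => k (t + x) - k t) 2 volume ≤ η := by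
    have hbound : ∀ t : ℝ, ‖k (t + x) - k t‖ ≤ ‖S.indicator (fun _ => c) t‖ := by
      intro t
      by_cases ht : t ∈ S
      · rw [Set.indicator_of_mem ht]
        have : dist (k (t + x)) (k t) < c := by
          apply hδ; simpa [Real.dist_eq] using hxδ
        rw [dist_eq_norm] at this
        simpa [abs_of_pos hc0] using this.le
      · rw [Set.indicator_of_notMem ht]
        have h1 : k t = 0 := by
          by_contra h
          exact ht (Metric.self_subset_cthickening _ (subset_tsupport k h))
        have h2 : k (t + x) = 0 := by
          by_contra h
          exact ht (Metric.mem_cthickening_of_dist_le t (t + x) 1 _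
            (subset_tsupport k h) (by simpa [Real.dist_eq, abs_sub_comm] using hx1))
        simp [h1, h2]
    calc eLpNorm (fun t : ℝ => k (t + x) - k t) 2 volume
        ≤ eLpNorm (S.indicator (fun _ => c)) 2 volume := eLpNorm_mono hbound
      _ = ‖c‖₊ * M := by
          rw [eLpNorm_indicator_const hS_meas (by norm_num) (by norm_num)]
          rfl
      _ = (η / (M + 1)) * M := by
          rw [hcdef]
          congr 1
          rw [← ENNReal.ofReal_coe_nnreal]
          rw [Real.nnnorm_of_nonneg hc0.le]
          simp [ENNReal.ofReal_toReal hqt]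
          exact ENNReal.ofReal_toReal hqt
      _ ≤ (η / (M + 1)) * (M + 1) := by
          exact mul_le_mul_right le_self_add _
      _ = η := ENNReal.div_mul_cancel (by simp [hM_ne_top]) (by simp [hM_ne_top])
  calc eLpNorm (fun t : ℝ => g (t + x) - g t) 2 volume
      ≤ eLpNorm (fun t : ℝ => (g - k) (t + x)) 2 volume
        + eLpNorm ((fun t : ℝ => k (t + x) - k t) + (k - g)) 2 volume := by
        rw [hsplit]
        exact eLpNorm_add_le m1 (m2.add m3) (by norm_num)
    _ ≤ eLpNorm (fun t : ℝ => (g - k) (t + x)) 2 volume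
        + (eLpNorm (fun t : ℝ => k (t + x) - k t) 2 volume + eLpNorm (k - g) 2 volume) := by
        gcongr
        exact eLpNorm_add_le m2 m3 (by norm_num)
    _ ≤ η + (η + η) := by gcongr
    _ ≤ ε/3 + (ε/3 + ε/3) := by gcongr
    _ = ε := by rw [← add_assoc]; exact ENNReal.add_thirds ε



lemma wmul_integrable {u g : ℝ → ℂ} (hg : MemLp g 2 (volume : Measure ℝ))
    (hu : MemLp u 2 (volume : Measure ℝ)) :
    Integrable (fun t => conj (g t) * u t) volume := by
  have h := MeasureTheory.L2.integrable_inner (𝕜 := ℂ) (hg.toLp g) (hu.toLp u)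
  apply h.congr
  filter_upwards [hg.coeFn_toLp, hu.coeFn_toLp] with t h1 h2
  simp [h1, h2, RCLike.inner_apply, mul_comm]

lemma wcauchy_schwarz {u g : ℝ → ℂ} (hg : MemLp g 2 (volume : Measure ℝ))
    (hu : MemLp u 2 (volume : Measure ℝ)) :
    ‖∫ t : ℝ, conj (g t) * u t‖
      ≤ (eLpNorm g 2 volume).toReal * (eLpNorm u 2 volume).toReal := by
  have h1 : ∫ t : ℝ, conj (g t) * u t = inner (𝕜 := ℂ) (hg.toLp g) (hu.toLp u) := by
    rw [MeasureTheory.L2.inner_def]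
    apply integral_congr_ae
    filter_upwards [hg.coeFn_toLp, hu.coeFn_toLp] with t h1 h2
    simp [h1, h2, RCLike.inner_apply, mul_comm]
  rw [h1]
  calc ‖inner (𝕜 := ℂ) (hg.toLp g) (hu.toLp u)‖
      ≤ ‖hg.toLp g‖ * ‖hu.toLp u‖ := norm_inner_le_norm _ _
    _ = (eLpNorm g 2 volume).toReal * (eLpNorm u 2 volume).toReal := by
        rw [MeasureTheory.Lp.norm_toLp, MeasureTheory.Lp.norm_toLp]

lemma wautocorr_prod_integrable {g : ℝ → ℂ} (hg : Integrable g volume) :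
    Integrable (fun p : ℝ × ℝ => g (p.2 + p.1) * conj (g p.2))
      ((volume : Measure ℝ).prod volume) := by
  have base : Integrable (fun q : ℝ × ℝ => conj (g q.1) * g q.2)
      ((volume : Measure ℝ).prod volume) := (wintegrable_conj hg).mul_prod hg
  have T : MeasurePreserving (fun p : ℝ × ℝ => (p.2, p.2 + p.1))
      ((volume : Measure ℝ).prod volume) ((volume : Measure ℝ).prod volume) :=
    measurePreserving_prod_add_swap volume volume
  have h2 := (T.integrable_comp base.aestronglyMeasurable).2 base
  apply h2.congr
  filter_upwards with p
  simp [Function.comp, mul_comm]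

lemma wfourier_autocorr {g : ℝ → ℂ} (hg : Integrable g volume) (ξ : ℝ) :
    𝓕 (fun x : ℝ => ∫ t : ℝ, g (t + x) * conj (g t)) ξ = 𝓕 g ξ * conj (𝓕 g ξ) := by
  have hEcont : Continuous (fun x : ℝ => Complex.exp (((-2 * π * x * ξ : ℝ) : ℂ) * Complex.I)) := by
    apply Complex.continuous_exp.comp
    exact (Complex.continuous_ofReal.comp (by continuity)).mul continuous_const
  have hprod : Integrable (fun p : ℝ × ℝ =>
      Complex.exp (((-2 * π * p.1 * ξ : ℝ) : ℂ) * Complex.I) * (g (p.2 + p.1) * conj (g p.2)))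
      ((volume : Measure ℝ).prod volume) := by
    apply (wautocorr_prod_integrable hg).bdd_mul (c := 1)
    · exact (hEcont.comp continuous_fst).aestronglyMeasurable
    · exact ae_of_all _ (fun p => le_of_eq (by
        rw [Complex.norm_exp_ofReal_mul_I]))
  have hinner : ∀ t : ℝ, (∫ x : ℝ, Complex.exp (((-2 * π * x * ξ : ℝ) : ℂ) * Complex.I) * g (t + x))
      = Complex.exp (((2 * π * t * ξ : ℝ) : ℂ) * Complex.I) * 𝓕 g ξ := by
    intro t
    have h1 : (∫ x : ℝ, Complex.exp (((-2 * π * x * ξ : ℝ) : ℂ) * Complex.I) * g (t + x))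
        = ∫ y : ℝ, Complex.exp (((-2 * π * (y - t) * ξ : ℝ) : ℂ) * Complex.I) * g y := by
      rw [← integral_add_right_eq_self
        (fun y : ℝ => Complex.exp (((-2 * π * (y - t) * ξ : ℝ) : ℂ) * Complex.I) * g y) t]
      congr 1
      funext x
      rw [add_sub_cancel_right, add_comm x t]
    rw [h1]
    have h2 : ∀ y : ℝ, Complex.exp (((-2 * π * (y - t) * ξ : ℝ) : ℂ) * Complex.I)
        = Complex.exp (((2 * π * t * ξ : ℝ) : ℂ) * Complex.I)
          * Complex.exp (((-2 * π * y * ξ : ℝ) : ℂ) * Complex.I) := by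
      intro y; rw [← Complex.exp_add]; congr 1; push_cast; ring
    calc ∫ y : ℝ, Complex.exp (((-2 * π * (y - t) * ξ : ℝ) : ℂ) * Complex.I) * g y
        = ∫ y : ℝ, Complex.exp (((2 * π * t * ξ : ℝ) : ℂ) * Complex.I)
            * (Complex.exp (((-2 * π * y * ξ : ℝ) : ℂ) * Complex.I) * g y) := by
          congr 1; funext y; rw [h2 y, mul_assoc]
      _ = Complex.exp (((2 * π * t * ξ : ℝ) : ℂ) * Complex.I)
            * ∫ y : ℝ, Complex.exp (((-2 * π * y * ξ : ℝ) : ℂ) * Complex.I) * g y :=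
          MeasureTheory.integral_const_mul _ _
      _ = Complex.exp (((2 * π * t * ξ : ℝ) : ℂ) * Complex.I) * 𝓕 g ξ := by
          rw [Real.fourier_real_eq_integral_exp_smul]
          simp_rw [smul_eq_mul]
  have hconj : ∀ t : ℝ, conj (g t) * (Complex.exp (((2 * π * t * ξ : ℝ) : ℂ) * Complex.I) * 𝓕 g ξ)
      = conj (Complex.exp (((-2 * π * t * ξ : ℝ) : ℂ) * Complex.I) * g t) * 𝓕 g ξ := by
    intro t
    rw [map_mul]
    have : conj (Complex.exp (((-2 * π * t * ξ : ℝ) : ℂ) * Complex.I))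
        = Complex.exp (((2 * π * t * ξ : ℝ) : ℂ) * Complex.I) := by
      rw [← Complex.exp_conj]
      congr 1
      simp only [map_mul, Complex.conj_ofReal, Complex.conj_I]
      push_cast
      ring
    rw [this]
    ring
  rw [Real.fourier_real_eq_integral_exp_smul]
  calc (∫ x : ℝ, Complex.exp (((-2 * π * x * ξ : ℝ) : ℂ) * Complex.I)
          • ∫ t : ℝ, g (t + x) * conj (g t))
      = ∫ x : ℝ, ∫ t : ℝ, Complex.exp (((-2 * π * x * ξ : ℝ) : ℂ) * Complex.I)
          * (g (t + x) * conj (g t)) := by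
        simp_rw [smul_eq_mul, ← MeasureTheory.integral_const_mul]
    _ = ∫ t : ℝ, ∫ x : ℝ, Complex.exp (((-2 * π * x * ξ : ℝ) : ℂ) * Complex.I)
          * (g (t + x) * conj (g t)) := integral_integral_swap hprod
    _ = ∫ t : ℝ, conj (g t) * ∫ x : ℝ, Complex.exp (((-2 * π * x * ξ : ℝ) : ℂ) * Complex.I)
          * g (t + x) := by
        congr 1
        funext t
        rw [← MeasureTheory.integral_const_mul]
        congr 1
        funext x
        ring
    _ = ∫ t : ℝ, conj (Complex.exp (((-2 * π * t * ξ : ℝ) : ℂ) * Complex.I) * g t) * 𝓕 g ξ := by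
        simp_rw [hinner, hconj]
    _ = 𝓕 g ξ * conj (𝓕 g ξ) := by
        rw [MeasureTheory.integral_mul_const, integral_conj]
        rw [Real.fourier_real_eq_integral_exp_smul]
        simp_rw [smul_eq_mul]
        ring

lemma wplancherel {g : ℝ → ℂ} (hg1 : Integrable g volume) (hg2 : MemLp g 2 volume)
    (hF : Integrable (fun ξ : ℝ => ‖𝓕 g ξ‖^2) volume) :
    ∫ ξ : ℝ, ‖𝓕 g ξ‖^2 = ∫ t : ℝ, ‖g t‖^2 := by
  set h : ℝ → ℂ := fun x => ∫ t : ℝ, conj (g t) * g (t + x) with hhdef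
  have hswap : h = fun x => ∫ t : ℝ, g (t + x) * conj (g t) := by
    funext x; apply integral_congr_ae; filter_upwards with t; ring
  have hh_int : Integrable h volume := by
    rw [hswap]
    exact (wautocorr_prod_integrable hg1).integral_prod_left
  have hFh : 𝓕 h = fun ξ : ℝ => ((‖𝓕 g ξ‖^2 : ℝ) : ℂ) := by
    funext ξ
    rw [hswap, wfourier_autocorr hg1 ξ, Complex.mul_conj, Complex.normSq_eq_norm_sq]
  have hFh_int : Integrable (𝓕 h) volume := by
    rw [hFh]; exact hF.ofReal
  have hcont : ContinuousAt h 0 := by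
    rw [ContinuousAt, tendsto_iff_norm_sub_tendsto_zero]
    have hb : ∀ x : ℝ, ‖h x - h 0‖ ≤ (eLpNorm g 2 volume).toReal *
        (eLpNorm (fun t : ℝ => g (t + x) - g t) 2 volume).toReal := by
      intro x
      have hmem : MemLp (fun t : ℝ => g (t + x)) 2 volume :=
        hg2.comp_measurePreserving (measurePreserving_add_right volume x)
      have hdiff : MemLp (fun t : ℝ => g (t + x) - g t) 2 volume := hmem.sub hg2
      have int1 : Integrable (fun t : ℝ => conj (g t) * g (t + x)) volume :=
        wmul_integrable hg2 hmem
      have int0 : Integrable (fun t : ℝ => conj (g t) * g t) volume :=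
        wmul_integrable hg2 hg2
      have hx0 : h x - h 0 = ∫ t : ℝ, conj (g t) * (g (t + x) - g t) := by
        have heq : (fun t : ℝ => conj (g t) * (g (t + x) - g t))
            = fun t : ℝ => conj (g t) * g (t + x) - conj (g t) * g t := by
          funext t; ring
        rw [heq, integral_sub int1 int0, hhdef]
        simp only [add_zero]
      rw [hx0]
      exact wcauchy_schwarz hg2 hdiff
    apply squeeze_zero (fun x => norm_nonneg _) hb
    have h2 := (ENNReal.tendsto_toReal ENNReal.zero_ne_top).comp (wtendsto_translate g hg2)
    have h3 : Filter.Tendsto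
        (fun x : ℝ => (eLpNorm (fun t : ℝ => g (t + x) - g t) 2 volume).toReal)
        (nhds 0) (nhds 0) := by exact h2
    simpa using h3.const_mul ((eLpNorm g 2 volume).toReal)
  have hinv := hh_int.fourierInv_fourier_eq hFh_int hcont
  have hlhs : 𝓕⁻ (𝓕 h) 0 = ((∫ ξ : ℝ, ‖𝓕 g ξ‖^2 : ℝ) : ℂ) := by
    rw [Real.fourierInv_eq_fourier_neg, neg_zero,
      Real.fourier_real_eq_integral_exp_smul]
    simp only [mul_zero, Complex.ofReal_zero, zero_mul, Complex.exp_zero, one_smul]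
    rw [hFh]
    exact integral_ofReal
  have hrhs : h 0 = ((∫ t : ℝ, ‖g t‖^2 : ℝ) : ℂ) := by
    rw [hhdef]
    simp only [add_zero]
    rw [show ((∫ t : ℝ, ‖g t‖^2 : ℝ) : ℂ) = ∫ t : ℝ, ((‖g t‖^2 : ℝ) : ℂ) from integral_ofReal.symm]
    apply integral_congr_ae
    filter_upwards with t
    rw [mul_comm, Complex.mul_conj, Complex.normSq_eq_norm_sq]
  rw [hlhs, hrhs] at hinv
  exact_mod_cast hinv

lemma wC_ne_zero (b : ℝ) (hb : b ≠ 0) : wC b ≠ 0 := by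
  rw [wC]
  apply one_div_ne_zero
  intro hzero
  rcases (Complex.cpow_eq_zero_iff _ _).1 hzero with ⟨h0, -⟩
  have hne : (2 * (Real.pi : ℂ) * Complex.I * (b : ℂ)) ≠ 0 := by
    simp [mul_eq_zero, Complex.I_ne_zero, Real.pi_ne_zero, hb, Complex.ofReal_eq_zero]
  exact hne h0

lemma winner_eq (a b c d u₀ w₀ : ℝ) (hb : b ≠ 0) (φ f : ℝ → ℂ) (w : ℝ)
    (hgi : Integrable (fun t : ℝ => f t * conj (φ (t - w)) * olctKernel a b c d u₀ w₀ t 0))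
    (h1w : Integrable (fun u : ℝ => ‖wolct a b c d u₀ w₀ φ f u w‖^2))
    (hw2 : MemLp (wgw a b u₀ φ f w) 2 volume) :
    (∫ u : ℝ, ‖wolct a b c d u₀ w₀ φ f u w‖^2)
      = ∫ t : ℝ, ‖f t‖^2 * ‖φ (t - w)‖^2 := by
  have hπb : 2 * Real.pi * b ≠ 0 := mul_ne_zero (by positivity) hb
  have habs : |2 * Real.pi * b| = 2 * Real.pi * |b| := by
    rw [abs_mul, abs_of_pos (by positivity : (0:ℝ) < 2 * Real.pi)]
  have habs0 : (2 * Real.pi * |b|) ≠ 0 := by positivity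
  have hE0 : wC b * Complex.exp ((wph b d u₀ w₀ 0 : ℂ) * Complex.I) ≠ 0 :=
    mul_ne_zero (wC_ne_zero b hb) (Complex.exp_ne_zero _)
  -- integrability of the auxiliary window function
  have hgInt : Integrable (wgw a b u₀ φ f w) volume := by
    have heq : ∀ t : ℝ, wgw a b u₀ φ f w t
        = (wC b * Complex.exp ((wph b d u₀ w₀ 0 : ℂ) * Complex.I))⁻¹ *
          (f t * conj (φ (t - w)) * olctKernel a b c d u₀ w₀ t 0) := by
      intro t
      rw [wfact a b c d u₀ w₀ hb φ f w t 0]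
      rw [zero_div, mul_zero, Complex.ofReal_zero, zero_mul, Complex.exp_zero, one_smul]
      rw [← mul_assoc, inv_mul_cancel₀ hE0, one_mul]
    have := hgi.const_mul ((wC b * Complex.exp ((wph b d u₀ w₀ 0 : ℂ) * Complex.I))⁻¹)
    apply this.congr
    filter_upwards with t
    exact (heq t).symm
  -- integrability of the squared norm of the Fourier transform
  have hGint : Integrable (fun ξ : ℝ => ‖𝓕 (wgw a b u₀ φ f w) ξ‖^2) volume := by
    have h' : Integrable (fun u : ℝ => ‖𝓕 (wgw a b u₀ φ f w) ((2 * Real.pi * b)⁻¹ * u)‖^2)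
        volume := by
      have h2 := h1w.const_mul (2 * Real.pi * |b|)
      apply h2.congr
      filter_upwards with u
      rw [norm_wolct_sq a b c d u₀ w₀ hb φ f u w, ← mul_assoc,
        mul_inv_cancel₀ habs0, one_mul, div_eq_inv_mul]
    exact (integrable_comp_mul_left_iff (fun ξ : ℝ => ‖𝓕 (wgw a b u₀ φ f w) ξ‖^2)
      (inv_ne_zero hπb)).1 h'
  have hplan := wplancherel hgInt hw2 hGint
  calc (∫ u : ℝ, ‖wolct a b c d u₀ w₀ φ f u w‖^2)
      = ∫ u : ℝ, (2 * Real.pi * |b|)⁻¹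
          * ‖𝓕 (wgw a b u₀ φ f w) ((2 * Real.pi * b)⁻¹ • u)‖^2 := by
        apply integral_congr_ae
        filter_upwards with u
        rw [norm_wolct_sq a b c d u₀ w₀ hb φ f u w, smul_eq_mul, div_eq_inv_mul]
    _ = (2 * Real.pi * |b|)⁻¹
          * ∫ u : ℝ, ‖𝓕 (wgw a b u₀ φ f w) ((2 * Real.pi * b)⁻¹ • u)‖^2 :=
        MeasureTheory.integral_const_mul _ _
    _ = (2 * Real.pi * |b|)⁻¹ * (|(((2 * Real.pi * b)⁻¹) ^ (Module.finrank ℝ ℝ))⁻¹|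
          • ∫ ξ : ℝ, ‖𝓕 (wgw a b u₀ φ f w) ξ‖^2) := by
        rw [MeasureTheory.Measure.integral_comp_smul volume
          (fun ξ : ℝ => ‖𝓕 (wgw a b u₀ φ f w) ξ‖^2) ((2 * Real.pi * b)⁻¹)]
    _ = ∫ ξ : ℝ, ‖𝓕 (wgw a b u₀ φ f w) ξ‖^2 := by
        rw [Module.finrank_self, pow_one, inv_inv, smul_eq_mul, habs, ← mul_assoc,
          inv_mul_cancel₀ habs0, one_mul]
    _ = ∫ t : ℝ, ‖wgw a b u₀ φ f w t‖^2 := hplan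
    _ = ∫ t : ℝ, ‖f t‖^2 * ‖φ (t - w)‖^2 := by
        apply integral_congr_ae
        filter_upwards with t
        exact norm_wgw a b u₀ φ f w t

/-- Plancherel-type identity for the WOLCT. -/
theorem wolct_plancherel (a b c d u₀ w₀ : ℝ) (hb : b ≠ 0) (hA : a * d - b * c = 1)
    (φ f : ℝ → ℂ) (hφ : MemLp φ 2 volume) (hφ0 : φ ≠ 0)
    (hf : MemLp f 2 volume)
    (hfi : ∀ u w : ℝ, Integrable (fun t : ℝ => f t * conj (φ (t - w)) * olctKernel a b c d u₀ w₀ t u))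
    (h1 : ∀ w : ℝ, Integrable (fun u : ℝ => ‖wolct a b c d u₀ w₀ φ f u w‖^2))
    (h2 : Integrable (fun w : ℝ => ∫ u : ℝ, ‖wolct a b c d u₀ w₀ φ f u w‖^2)) :
    (∫ w : ℝ, ∫ u : ℝ, ‖wolct a b c d u₀ w₀ φ f u w‖^2)
      = (∫ t : ℝ, ‖f t‖^2) * (∫ t : ℝ, ‖φ t‖^2) := by

  have hf2 : Integrable (fun t : ℝ => ‖f t‖^2) volume :=
    (memLp_two_iff_integrable_sq_norm hf.1).1 hf
  have hφ2 : Integrable (fun t : ℝ => ‖φ t‖^2) volume :=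
    (memLp_two_iff_integrable_sq_norm hφ.1).1 hφ
  have base : Integrable (fun q : ℝ × ℝ => ‖φ q.1‖^2 * ‖f q.2‖^2)
      ((volume : Measure ℝ).prod volume) := hφ2.mul_prod hf2
  have T : MeasurePreserving (fun p : ℝ × ℝ => (p.2 - p.1, p.2))
      ((volume : Measure ℝ).prod volume) ((volume : Measure ℝ).prod volume) := by
    have s1 : MeasurePreserving (Prod.swap : ℝ × ℝ → ℝ × ℝ)
        ((volume : Measure ℝ).prod volume) ((volume : Measure ℝ).prod volume) :=
      Measure.measurePreserving_swap
    have s2 : MeasurePreserving (fun q : ℝ × ℝ => (q.1, -q.2))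
        ((volume : Measure ℝ).prod volume) ((volume : Measure ℝ).prod volume) :=
      (MeasurePreserving.id volume).prod (Measure.measurePreserving_neg volume)
    have s3 : MeasurePreserving (fun q : ℝ × ℝ => (q.1, q.1 + q.2))
        ((volume : Measure ℝ).prod volume) ((volume : Measure ℝ).prod volume) :=
      measurePreserving_prod_add volume volume
    have hcomp := s1.comp (s3.comp (s2.comp s1))
    have heq : ((Prod.swap : ℝ × ℝ → ℝ × ℝ) ∘ ((fun q : ℝ × ℝ => (q.1, q.1 + q.2))
        ∘ ((fun q : ℝ × ℝ => (q.1, -q.2)) ∘ (Prod.swap : ℝ × ℝ → ℝ × ℝ))))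
        = fun p : ℝ × ℝ => (p.2 - p.1, p.2) := by
      funext p
      simp [Function.comp, sub_eq_add_neg]
    rwa [heq] at hcomp
  have Q : Integrable (fun p : ℝ × ℝ => ‖f p.2‖^2 * ‖φ (p.2 - p.1)‖^2)
      ((volume : Measure ℝ).prod volume) := by
    have hI := (T.integrable_comp base.aestronglyMeasurable).2 base
    apply hI.congr
    filter_upwards with p
    simp [Function.comp, mul_comm]
  have haew : ∀ᵐ w : ℝ ∂(volume : Measure ℝ),
      Integrable (fun t : ℝ => ‖f t‖^2 * ‖φ (t - w)‖^2) volume := Q.prod_right_ae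
  have haem : ∀ᵐ w : ℝ ∂(volume : Measure ℝ), MemLp (wgw a b u₀ φ f w) 2 volume := by
    filter_upwards [haew] with w hw
    have hφm : AEStronglyMeasurable (fun t : ℝ => φ (t - w)) volume := by
      have := hφ.1.comp_measurePreserving (measurePreserving_add_right volume (-w))
      simp only [sub_eq_add_neg]; exact this
    have hconjm : AEStronglyMeasurable (fun t : ℝ => conj (φ (t - w))) volume :=
      Complex.continuous_conj.comp_aestronglyMeasurable hφm
    have hexpm : AEStronglyMeasurable
        (fun t : ℝ => Complex.exp (((a/(2*b) * t^2 + u₀/b * t : ℝ) : ℂ) * Complex.I))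
        volume := by
      apply Continuous.aestronglyMeasurable
      apply Complex.continuous_exp.comp
      exact (Complex.continuous_ofReal.comp (by fun_prop)).mul continuous_const
    have haesm : AEStronglyMeasurable (wgw a b u₀ φ f w) volume :=
      (hf.1.mul hconjm).mul hexpm
    rw [memLp_two_iff_integrable_sq_norm haesm]
    apply hw.congr
    filter_upwards with t
    exact (norm_wgw a b u₀ φ f w t).symm
  have hkey : ∀ᵐ w : ℝ ∂(volume : Measure ℝ),
      (∫ u : ℝ, ‖wolct a b c d u₀ w₀ φ f u w‖^2)
        = ∫ t : ℝ, ‖f t‖^2 * ‖φ (t - w)‖^2 := by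
    filter_upwards [haem] with w hw
    exact winner_eq a b c d u₀ w₀ hb φ f w (hfi 0 w) (h1 w) hw
  rw [integral_congr_ae hkey]
  rw [MeasureTheory.integral_integral_swap
    (f := fun w t : ℝ => ‖f t‖^2 * ‖φ (t - w)‖^2) Q]
  have hinner : ∀ t : ℝ, (∫ w : ℝ, ‖f t‖^2 * ‖φ (t - w)‖^2)
      = ‖f t‖^2 * ∫ s : ℝ, ‖φ s‖^2 := by
    intro t
    rw [MeasureTheory.integral_const_mul]
    congr 1
    exact integral_sub_left_eq_self (fun s : ℝ => ‖φ s‖^2) volume t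
  simp_rw [hinner]
  rw [MeasureTheory.integral_mul_const]
end

section
/- Parity property of the WOLCT: for any window function φ ∈ L²(ℝ) \ {0} and any f ∈ L²(ℝ), writing Pg(t) = g(−t), one has V_{Pφ}^A{Pf}(u, w) = V_φ^A f(2u₀ − u, −w) · exp(2i w₀(u − u₀)) for all u, w ∈ ℝ. -/
open MeasureTheory Complex ComplexConjugate

lemma olctKernel_neg (a b c d u₀ w₀ : ℝ) (hb : b ≠ 0) (t u : ℝ) :
    olctKernel a b c d u₀ w₀ (-t) u
      = olctKernel a b c d u₀ w₀ t (2*u₀ - u) * Complex.exp (2 * Complex.I * w₀ * (u - u₀)) := by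
  have hb' : (b : ℂ) ≠ 0 := by exact_mod_cast hb
  unfold olctKernel
  rw [mul_assoc _ (Complex.exp _) (Complex.exp _), ← Complex.exp_add]
  congr 2
  push_cast
  simp only [div_eq_mul_inv, mul_inv]
  have h : (b:ℂ) * (b:ℂ)⁻¹ = 1 := mul_inv_cancel₀ hb'
  linear_combination (2 * Complex.I * (w₀:ℂ) * (u:ℂ) - 2 * Complex.I * (w₀:ℂ) * (u₀:ℂ)) * h

/-- Parity property of the WOLCT. -/
theorem wolct_parity (a b c d u₀ w₀ : ℝ) (hb : b ≠ 0) (hA : a * d - b * c = 1)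
    (φ f : ℝ → ℂ) (hφ : MemLp φ 2 volume) (hφ0 : φ ≠ 0)
    (hf : MemLp f 2 volume)
    (hfi : ∀ u w : ℝ, Integrable (fun t : ℝ => f t * conj (φ (t - w)) * olctKernel a b c d u₀ w₀ t u))
    (u w : ℝ) :
    wolct a b c d u₀ w₀ (fun t => φ (-t)) (fun t => f (-t)) u w
      = wolct a b c d u₀ w₀ φ f (2*u₀ - u) (-w)
        * Complex.exp (2 * Complex.I * w₀ * (u - u₀)) := by
  unfold wolct
  rw [← MeasureTheory.integral_mul_const]
  rw [← MeasureTheory.integral_neg_eq_self (fun t : ℝ =>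
      f t * conj (φ (t - -w)) * olctKernel a b c d u₀ w₀ t (2*u₀ - u)
        * Complex.exp (2 * Complex.I * w₀ * (u - u₀)))]
  congr 1
  funext t
  have h := olctKernel_neg a b c d u₀ w₀ hb (-t) u
  rw [neg_neg] at h
  rw [h]
  ring_nf
end
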